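/- arXiv:2603.08509 — 2 statements merged into one kernel-verified Lean document; each statement's English description precedes it below -/
import Mathlib

section
/- Each Young orthogonal form operator s_k (2 ≤ k ≤ n) on W^λ is an isometry for the inner product on W^λ making the basis (e_T), T ∈ SYT(λ), orthonormal: ⟨s_k x, s_k y⟩ = ⟨x, y⟩ for all x, y ∈ W^λ. -/
noncomputable section

namespace WLE

/-- A filling (bijective labelling of the cells of `μ` by `Fin μ.card`) is *standard* if
its entries increase strictly along rows and columns. -/
def IsStandard (μ : YoungDiagram) (f : {c : ℕ × ℕ // c ∈ μ.cells} ≃ Fin μ.card) : Prop :=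
  ∀ c c' : {c : ℕ × ℕ // c ∈ μ.cells},
    ((c.1.1 = c'.1.1 ∧ c.1.2 < c'.1.2) ∨ (c.1.2 = c'.1.2 ∧ c.1.1 < c'.1.1)) →
      f c < f c'

/-- A standard Young tableau of shape `μ`: a bijection from the cells of `μ` to
`Fin μ.card` (0-indexed entries; the paper's entry `k ∈ {1,…,n}` corresponds to the
value `k − 1 : Fin μ.card`) increasing along rows and columns. -/
def SYT (μ : YoungDiagram) : Type :=
  {f : {c : ℕ × ℕ // c ∈ μ.cells} ≃ Fin μ.card // IsStandard μ f}

instance (μ : YoungDiagram) : Finite (SYT μ) := by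
  have : Finite ({c : ℕ × ℕ // c ∈ μ.cells} ≃ Fin μ.card) :=
    Finite.of_injective (fun f => (f : {c : ℕ × ℕ // c ∈ μ.cells} → Fin μ.card))
      fun f g h => Equiv.coe_fn_injective h
  exact Subtype.finite

noncomputable instance (μ : YoungDiagram) : Fintype (SYT μ) := Fintype.ofFinite _

noncomputable instance (μ : YoungDiagram) : DecidableEq (SYT μ) := Classical.decEq _

/-- `content T k` is the content `j − i` of the cell (row `i`, column `j`, 0-indexed)
of `T` containing the entry `k`. -/
def content {μ : YoungDiagram} (T : SYT μ) (k : Fin μ.card) : ℤ :=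
  ((T.1.symm k).1.2 : ℤ) - ((T.1.symm k).1.1 : ℤ)

/-- The index `k − 1` (in `Fin μ.card`), used to form the adjacent transposition
`(k−1 k)`. -/
def kpred {μ : YoungDiagram} (k : Fin μ.card) : Fin μ.card :=
  ⟨k.val - 1, lt_of_le_of_lt (Nat.sub_le _ _) k.isLt⟩

/-- The filling obtained from `T` by exchanging the entries `k−1` and `k`. -/
def swapped {μ : YoungDiagram} (k : Fin μ.card) (T : SYT μ) :
    {c : ℕ × ℕ // c ∈ μ.cells} ≃ Fin μ.card :=
  T.1.trans (Equiv.swap (kpred k) k)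

/-- The (real) axial distance `d = c_T(k) − c_T(k−1)`. -/
def dval {μ : YoungDiagram} (k : Fin μ.card) (T : SYT μ) : ℝ :=
  ((content T k - content T (kpred k) : ℤ) : ℝ)

noncomputable instance (μ : YoungDiagram) : DecidablePred (IsStandard μ) :=
  fun _ => Classical.propDecidable _

/-- The Young orthogonal form operator `s_k` on `W^μ = EuclideanSpace ℝ (SYT μ)`:
`s_k e_T = (1/d) e_T + √(1 − 1/d²) e_{(k−1 k)T}`, with `d = c_T(k) − c_T(k−1)` and
`e_{(k−1 k)T} = 0` when the swapped filling is not standard. -/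
def youngOp (μ : YoungDiagram) (k : Fin μ.card) :
    EuclideanSpace ℝ (SYT μ) →ₗ[ℝ] EuclideanSpace ℝ (SYT μ) where
  toFun x := WithLp.toLp 2 fun T => (dval k T)⁻¹ * x T +
    Real.sqrt (1 - ((dval k T)⁻¹) ^ 2) *
      (if h : IsStandard μ (swapped k T) then x ⟨swapped k T, h⟩ else 0)
  map_add' x y := by
    ext T
    by_cases h : IsStandard μ (swapped k T) <;>
      simp [h, PiLp.add_apply] <;> (try erw [Pi.add_apply]) <;> ring
  map_smul' c x := by
    ext T
    by_cases h : IsStandard μ (swapped k T) <;>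
      simp [h, PiLp.smul_apply, smul_eq_mul] <;> (try erw [Pi.smul_apply, smul_eq_mul]) <;> ring

end WLE

namespace WLE

open scoped RealInnerProductSpace

variable {μ : YoungDiagram}

/-- Entries of a standard tableau strictly increase componentwise. -/
lemma syt_mono (T : SYT μ) (p q : {c : ℕ × ℕ // c ∈ μ.cells})
    (h1 : p.1.1 ≤ q.1.1) (h2 : p.1.2 ≤ q.1.2) (hne : p ≠ q) : T.1 p < T.1 q := by
  have hq : (q.1.1, q.1.2) ∈ μ := by
    have := q.2; rw [YoungDiagram.mem_cells] at this; simpa using this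
  have hm : (p.1.1, q.1.2) ∈ μ.cells := by
    rw [YoungDiagram.mem_cells]; exact μ.up_left_mem h1 le_rfl hq
  rcases eq_or_lt_of_le h1 with e1 | l1
  · have hlt : p.1.2 < q.1.2 := by
      rcases eq_or_lt_of_le h2 with e2 | l2
      · exact absurd (Subtype.ext (Prod.ext e1 e2)) hne
      · exact l2
    exact T.2 p q (Or.inl ⟨e1, hlt⟩)
  rcases eq_or_lt_of_le h2 with e2 | l2
  · exact T.2 p q (Or.inr ⟨e2, l1⟩)
  · calc T.1 p < T.1 ⟨(p.1.1, q.1.2), hm⟩ := T.2 _ _ (Or.inl ⟨rfl, l2⟩)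
      _ < T.1 q := T.2 _ _ (Or.inr ⟨rfl, l1⟩)

lemma kpred_ne (k : Fin μ.card) (hk : 1 ≤ k.val) : kpred k ≠ k := by
  simp only [Fin.ne_iff_vne, kpred]
  omega

/-- The axial distance is a nonzero integer. -/
lemma content_ne (T : SYT μ) (k : Fin μ.card) (hk : 1 ≤ k.val) :
    content T k ≠ content T (kpred k) := by
  intro hEq
  set p := T.1.symm (kpred k) with hp
  set q := T.1.symm k with hq
  have hfp : T.1 p = kpred k := T.1.apply_symm_apply _
  have hfq : T.1 q = k := T.1.apply_symm_apply _
  have hpq : p ≠ q := by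
    intro h; rw [h, hfq] at hfp; exact kpred_ne k hk hfp.symm
  have hc : (q.1.2 : ℤ) - q.1.1 = (p.1.2 : ℤ) - p.1.1 := hEq
  rcases lt_trichotomy p.1.1 q.1.1 with h | h | h
  · -- then p.1.2 < q.1.2 ; a middle cell gives a gap ≥ 2
    have hcol : p.1.2 < q.1.2 := by omega
    have hqmem : (q.1.1, q.1.2) ∈ μ := by
      have := q.2; rw [YoungDiagram.mem_cells] at this; simpa using this
    have hm : (p.1.1, q.1.2) ∈ μ.cells := by
      rw [YoungDiagram.mem_cells]; exact μ.up_left_mem h.le le_rfl hqmem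
    set m : {c : ℕ × ℕ // c ∈ μ.cells} := ⟨(p.1.1, q.1.2), hm⟩ with hmdef
    have h1 : T.1 p < T.1 m := T.2 p m (Or.inl ⟨rfl, hcol⟩)
    have h2 : T.1 m < T.1 q := syt_mono T m q h.le le_rfl
      (by intro hEq2; apply hpq.elim; exact absurd (congrArg (fun c => c.1.1) hEq2) (by show ¬ p.1.1 = q.1.1; omega))
    rw [hfp] at h1; rw [hfq] at h2
    have := h1.trans h2
    simp only [Fin.lt_def, kpred] at h1 h2
    omega
  · exact hpq (by
      apply Subtype.ext; apply Prod.ext h (by omega))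
  · have hcol : q.1.2 < p.1.2 := by omega
    have := syt_mono T q p h.le hcol.le (fun hEq2 => hpq hEq2.symm)
    rw [hfp, hfq] at this
    simp only [Fin.lt_def, kpred] at this
    omega

lemma dval_ne_zero (T : SYT μ) (k : Fin μ.card) (hk : 1 ≤ k.val) : dval k T ≠ 0 := by
  unfold dval
  rw [Int.cast_ne_zero, sub_ne_zero]
  exact content_ne T k hk

lemma one_le_dval_sq (T : SYT μ) (k : Fin μ.card) (hk : 1 ≤ k.val) :
    1 ≤ (dval k T) ^ 2 := by
  unfold dval
  have h : content T k - content T (kpred k) ≠ 0 := sub_ne_zero.mpr (content_ne T k hk)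
  have : 1 ≤ (content T k - content T (kpred k)) ^ 2 := by
    rcases h.lt_or_gt with h | h <;> nlinarith
  calc (1 : ℝ) = ((1 : ℤ) : ℝ) := by norm_num
    _ ≤ (((content T k - content T (kpred k)) ^ 2 : ℤ) : ℝ) := by exact_mod_cast this
    _ = _ := by push_cast; ring

lemma inv_dval_sq_le_one (T : SYT μ) (k : Fin μ.card) (hk : 1 ≤ k.val) :
    ((dval k T)⁻¹) ^ 2 ≤ 1 := by
  have h1 : dval k T * (dval k T)⁻¹ = 1 := mul_inv_cancel₀ (dval_ne_zero T k hk)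
  nlinarith [h1, one_le_dval_sq T k hk, sq_nonneg ((dval k T)⁻¹)]

/-- If the swapped filling is not standard, the axial distance is ±1. -/
lemma dval_sq_eq_one (T : SYT μ) (k : Fin μ.card) (hk : 1 ≤ k.val)
    (h : ¬ IsStandard μ (swapped k T)) : (dval k T) ^ 2 = 1 := by
  unfold IsStandard at h
  push_neg at h
  obtain ⟨p, q, hrel, hle⟩ := h
  have hfpq : T.1 p < T.1 q := T.2 p q hrel
  have hvals : T.1 p = kpred k ∧ T.1 q = k := by
    have hle' : Equiv.swap (kpred k) k (T.1 q) ≤ Equiv.swap (kpred k) k (T.1 p) := not_lt.mp (by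
      simpa [swapped] using hle)
    by_cases h1 : T.1 p = kpred k <;> by_cases h2 : T.1 p = k <;>
      by_cases h3 : T.1 q = kpred k <;> by_cases h4 : T.1 q = k <;>
      simp [h1, h2, h3, h4, Equiv.swap_apply_of_ne_of_ne, Equiv.swap_apply_left,
        Equiv.swap_apply_right] at hle' ⊢ <;>
    · simp only [Fin.ext_iff, Fin.lt_def, Fin.le_def, kpred] at *
      omega
  -- identify p and q with the cells of k-1 and k
  have hkk : (T.1 q).val = (T.1 p).val + 1 := by
    rw [hvals.1, hvals.2]; simp [kpred]; omega
  -- adjacency: no cell strictly between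
  have hadj : (p.1.1 = q.1.1 ∧ q.1.2 = p.1.2 + 1) ∨ (p.1.2 = q.1.2 ∧ q.1.1 = p.1.1 + 1) := by
    have hqmem : (q.1.1, q.1.2) ∈ μ := by
      have := q.2; rw [YoungDiagram.mem_cells] at this; simpa using this
    rcases hrel with ⟨hrow, hcol⟩ | ⟨hcol, hrow⟩
    · left; refine ⟨hrow, ?_⟩
      by_contra hne
      have hlt : p.1.2 + 1 < q.1.2 := by omega
      have hm : (p.1.1, p.1.2 + 1) ∈ μ.cells := by
        rw [YoungDiagram.mem_cells]
        exact μ.up_left_mem hrow.le hlt.le hqmem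
      have h1 : T.1 p < T.1 ⟨(p.1.1, p.1.2 + 1), hm⟩ :=
        T.2 _ _ (Or.inl ⟨rfl, Nat.lt_succ_self _⟩)
      have h2 : T.1 ⟨(p.1.1, p.1.2 + 1), hm⟩ < T.1 q := T.2 _ _ (Or.inl ⟨hrow, hlt⟩)
      simp only [Fin.lt_def] at h1 h2
      omega
    · right; refine ⟨hcol, ?_⟩
      by_contra hne
      have hlt : p.1.1 + 1 < q.1.1 := by omega
      have hm : (p.1.1 + 1, p.1.2) ∈ μ.cells := by
        rw [YoungDiagram.mem_cells]
        exact μ.up_left_mem hlt.le hcol.le hqmem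
      have h1 : T.1 p < T.1 ⟨(p.1.1 + 1, p.1.2), hm⟩ :=
        T.2 _ _ (Or.inr ⟨rfl, Nat.lt_succ_self _⟩)
      have h2 : T.1 ⟨(p.1.1 + 1, p.1.2), hm⟩ < T.1 q := T.2 _ _ (Or.inr ⟨hcol, hlt⟩)
      simp only [Fin.lt_def] at h1 h2
      omega
  have hpcell : T.1.symm (kpred k) = p := by rw [← hvals.1, Equiv.symm_apply_apply]
  have hqcell : T.1.symm k = q := by rw [← hvals.2, Equiv.symm_apply_apply]
  have : dval k T = ((q.1.2 : ℤ) - q.1.1 - ((p.1.2 : ℤ) - p.1.1) : ℤ) := by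
    unfold dval content
    rw [hpcell, hqcell]
  rcases hadj with ⟨h1, h2⟩ | ⟨h1, h2⟩
  · rw [this]
    have : ((q.1.2 : ℤ) - q.1.1 - ((p.1.2 : ℤ) - p.1.1)) = 1 := by
      rw [← h1, h2]; push_cast; ring
    rw [this]; norm_num
  · rw [this]
    have : ((q.1.2 : ℤ) - q.1.1 - ((p.1.2 : ℤ) - p.1.1)) = -1 := by
      rw [← h1, h2]; push_cast; ring
    rw [this]; norm_num

lemma swapped_swapped (T : SYT μ) (k : Fin μ.card) (h : IsStandard μ (swapped k T)) :
    swapped k (⟨swapped k T, h⟩ : SYT μ) = T.1 := by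
  show (T.1.trans (Equiv.swap (kpred k) k)).trans (Equiv.swap (kpred k) k) = T.1
  rw [Equiv.trans_assoc, Equiv.swap_swap, Equiv.trans_refl]

lemma dval_swapped (T : SYT μ) (k : Fin μ.card) (h : IsStandard μ (swapped k T)) :
    dval k (⟨swapped k T, h⟩ : SYT μ) = - dval k T := by
  unfold dval content
  have h1 : ((⟨swapped k T, h⟩ : SYT μ)).1.symm k = T.1.symm (kpred k) := by
    show (swapped k T).symm k = _
    simp [swapped, Equiv.symm_trans_apply, Equiv.symm_swap, Equiv.swap_apply_right]
  have h2 : ((⟨swapped k T, h⟩ : SYT μ)).1.symm (kpred k) = T.1.symm k := by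
    show (swapped k T).symm (kpred k) = _
    simp [swapped, Equiv.symm_trans_apply, Equiv.symm_swap, Equiv.swap_apply_left]
  rw [h1, h2]; push_cast; ring

lemma youngOp_apply (k : Fin μ.card) (x : EuclideanSpace ℝ (SYT μ)) (T : SYT μ) :
    youngOp μ k x T = (dval k T)⁻¹ * x T +
      Real.sqrt (1 - ((dval k T)⁻¹) ^ 2) *
        (if h : IsStandard μ (swapped k T) then x ⟨swapped k T, h⟩ else 0) := rfl

/-- Each Young orthogonal form operator `s_k` (`2 ≤ k ≤ n`, i.e.
`1 ≤ k` in the 0-indexed convention) on `W^λ = EuclideanSpace ℝ (SYT μ)` is an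
isometry for the inner product making the basis `(e_T)` orthonormal. -/
theorem youngOp_isometry (μ : YoungDiagram) (hn : 2 ≤ μ.card)
    (k : Fin μ.card) (hk : 1 ≤ k.val) (x y : EuclideanSpace ℝ (SYT μ)) :
    ⟪youngOp μ k x, youngOp μ k y⟫ = ⟪x, y⟫ := by
  classical
  -- the pairing involution
  set σ : SYT μ → SYT μ := fun T =>
    if h : IsStandard μ (swapped k T) then ⟨swapped k T, h⟩ else T with hσdef
  have hσstd : ∀ (T : SYT μ) (h : IsStandard μ (swapped k T)),
      IsStandard μ (swapped k (⟨swapped k T, h⟩ : SYT μ)) := by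
    intro T h; rw [swapped_swapped T k h]; exact T.2
  have hσback : ∀ (T : SYT μ) (h : IsStandard μ (swapped k T))
      (h' : IsStandard μ (swapped k (⟨swapped k T, h⟩ : SYT μ))),
      (⟨swapped k (⟨swapped k T, h⟩ : SYT μ), h'⟩ : SYT μ) = T := by
    intro T h h'; exact Subtype.ext (swapped_swapped T k h)
  have hσ : Function.Involutive σ := by
    intro T
    by_cases h : IsStandard μ (swapped k T)
    · have e1 : σ T = ⟨swapped k T, h⟩ := dif_pos h
      have e2 : σ ⟨swapped k T, h⟩ = ⟨swapped k ⟨swapped k T, h⟩, hσstd T h⟩ := dif_pos (hσstd T h)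
      exact (congrArg σ e1).trans (e2.trans (hσback T h _))
    · have e1 : σ T = T := dif_neg h
      exact (congrArg σ e1).trans e1
  set F : SYT μ → ℝ := fun T => youngOp μ k x T * youngOp μ k y T with hF
  set G : SYT μ → ℝ := fun T => x T * y T with hG
  have key : ∀ T, F T + F (σ T) = G T + G (σ T) := by
    intro T
    by_cases h : IsStandard μ (swapped k T)
    · -- paired case
      have hσT : σ T = ⟨swapped k T, h⟩ := dif_pos h
      have hstd' := hσstd T h
      have hback := hσback T h hstd'
      set a : ℝ := (dval k T)⁻¹ with ha
      have hd' : dval k (⟨swapped k T, h⟩ : SYT μ) = - dval k T := dval_swapped T k h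
      have hinva : (dval k (⟨swapped k T, h⟩ : SYT μ))⁻¹ = -a := by rw [hd', ha, inv_neg]
      have hs2 : Real.sqrt (1 - a ^ 2) ^ 2 = 1 - a ^ 2 :=
        Real.sq_sqrt (by linarith [inv_dval_sq_le_one T k hk])
      have hFT : F T = (a * x T + Real.sqrt (1 - a ^ 2) * x ⟨swapped k T, h⟩) *
          (a * y T + Real.sqrt (1 - a ^ 2) * y ⟨swapped k T, h⟩) := by
        rw [hF]; simp only [youngOp_apply, dif_pos h, ha]
      have hFT' : F ⟨swapped k T, h⟩ =
          (-a * x ⟨swapped k T, h⟩ + Real.sqrt (1 - a ^ 2) * x T) *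
          (-a * y ⟨swapped k T, h⟩ + Real.sqrt (1 - a ^ 2) * y T) := by
        have ex := youngOp_apply k x (⟨swapped k T, h⟩ : SYT μ)
        have ey := youngOp_apply k y (⟨swapped k T, h⟩ : SYT μ)
        simp only [hF, ex, ey, dif_pos hstd', hinva, hback]
        rw [show (1 - (-a) ^ 2) = 1 - a ^ 2 by ring]
      rw [hσT, hFT, hFT']
      show _ = x T * y T + x ⟨swapped k T, h⟩ * y ⟨swapped k T, h⟩
      linear_combination (x T * y T + x ⟨swapped k T, h⟩ * y ⟨swapped k T, h⟩) * hs2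
    · have hσT : σ T = T := dif_neg h
      have hd2 : (dval k T) ^ 2 = 1 := dval_sq_eq_one T k hk h
      have hFT : F T = x T * y T := by
        rw [hF]; simp only [youngOp_apply, dif_neg h, mul_zero, add_zero]
        have h1 : ((dval k T)⁻¹) ^ 2 = 1 := by rw [inv_pow, hd2]; norm_num
        linear_combination (x T * y T) * h1
      rw [hσT]
      show F T + F T = x T * y T + x T * y T
      rw [hFT]
  -- sum up using the involution
  have hsum : ∑ T : SYT μ, F T = ∑ T : SYT μ, G T := by
    have h2 : ∑ T : SYT μ, (F T + F (σ T)) = ∑ T : SYT μ, (G T + G (σ T)) :=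
      Finset.sum_congr rfl (fun T _ => key T)
    rw [Finset.sum_add_distrib, Finset.sum_add_distrib] at h2
    have e := hσ.toPerm
    have hFc : ∑ T : SYT μ, F (σ T) = ∑ T : SYT μ, F T := Equiv.sum_comp hσ.toPerm F
    have hGc : ∑ T : SYT μ, G (σ T) = ∑ T : SYT μ, G T := Equiv.sum_comp hσ.toPerm G
    rw [hFc, hGc] at h2
    linarith
  simpa [PiLp.inner_apply, RCLike.inner_apply, conj_trivial, hF, hG, mul_comm] using hsum

end WLE
end
end

section
/- Let n ≥ 2, let λ be a partition of n−2, let μ and ν be two distinct partitions of n−1 and ξ a partition of n, such that each of the diagrams of μ and ν is obtained from that of λ by adding one cell, and the diagram of ξ is obtained from each of the diagrams of μ and ν by adding one cell. Let c₁ be the content of the cell ξ/μ and c₂ the content of the cell μ/λ (the content of a cell in row i, column j being j − i). Then the endomorphism i_{λν} ∘ i_{νξ} ∘ ρ_ξ((n−1 n)) ∘ i_{ξμ} ∘ i_{μλ} of W^λ equals √(1 − 1/(c₁ − c₂)²) · id; that is, it equals sin θ · id, where θ ∈ [0,π] is defined by cos θ = 1/(c₁ − c₂). -/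
noncomputable section

namespace WLE

open scoped RealInnerProductSpace


lemma diff_unique (s t : Finset (ℕ × ℕ)) (hsub : s ⊆ t) (hcard : t.card = s.card + 1)
    (c0 : ℕ × ℕ) (h1 : c0 ∈ t) (h2 : c0 ∉ s) : ∀ x ∈ t, x ∉ s → x = c0 := by
  intro x hx hxs
  have hd : (t \ s).card = 1 := by rw [Finset.card_sdiff_of_subset hsub]; omega
  obtain ⟨a, ha⟩ := Finset.card_eq_one.mp hd
  have h1' : c0 ∈ t \ s := Finset.mem_sdiff.mpr ⟨h1, h2⟩
  have hx' : x ∈ t \ s := Finset.mem_sdiff.mpr ⟨hx, hxs⟩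
  rw [ha, Finset.mem_singleton] at h1' hx'
  rw [hx', h1']

lemma top_value (α β : YoungDiagram) (hsub : α.cells ⊆ β.cells)
    (hcard : β.card = α.card + 1)
    (c0 : ℕ × ℕ) (hc0 : c0 ∈ β.cells)
    (huniq : ∀ x ∈ β.cells, x ∉ α.cells → x = c0)
    (f : {c : ℕ × ℕ // c ∈ β.cells} ≃ Fin β.card)
    (hf : ∀ (c : ℕ × ℕ) (hc : c ∈ α.cells), ((f ⟨c, hsub hc⟩) : ℕ) < α.card) :
    ((f ⟨c0, hc0⟩) : ℕ) = α.card := by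
  have hwlt : α.card < β.card := by omega
  set w : Fin β.card := ⟨α.card, hwlt⟩ with hw
  have key : f.symm w = ⟨c0, hc0⟩ := by
    by_cases hc : (f.symm w).1 ∈ α.cells
    · exfalso
      have h1 := hf (f.symm w).1 hc
      have h2 : (⟨(f.symm w).1, hsub hc⟩ : {c // c ∈ β.cells}) = f.symm w := Subtype.ext rfl
      rw [h2, Equiv.apply_symm_apply] at h1
      simp [hw] at h1
    · exact Subtype.ext (huniq _ (f.symm w).2 hc)
  have h3 : f ⟨c0, hc0⟩ = w := by rw [← key, Equiv.apply_symm_apply]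
  rw [h3]

/-- Let `n ≥ 2`, let `λ` be a partition of `n−2`, let `μ ≠ ν` be
two distinct partitions of `n−1` obtained from `λ` by adding one cell, and `ξ` a
partition of `n` obtained from each of `μ` and `ν` by adding one cell.  Let `c₁` be
the content of the cell `ξ/μ` and `c₂` the content of the cell `μ/λ`.  With the
box-adding maps `i_{μλ}, i_{ξμ}, i_{νλ}, i_{ξν}`, the adjoints `i_{λν}, i_{νξ}`, and
the Young orthogonal form representation `ρ_ξ`, the endomorphism
`i_{λν} ∘ i_{νξ} ∘ ρ_ξ((n−1 n)) ∘ i_{ξμ} ∘ i_{μλ}` of `W^λ` equals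
`√(1 − 1/(c₁−c₂)²) · id = sin θ · id`, where `cos θ = 1/(c₁−c₂)`, `θ ∈ [0,π]`. -/
theorem composite_eq_sin_smul_id (lam mu nu xi : YoungDiagram) (hn : 2 ≤ xi.card)
    (hmunu : mu ≠ nu)
    (hsub1 : lam.cells ⊆ mu.cells) (hcard1 : mu.card = lam.card + 1)
    (hsub1' : lam.cells ⊆ nu.cells) (hcard1' : nu.card = lam.card + 1)
    (hsub2 : mu.cells ⊆ xi.cells) (hcard2 : xi.card = mu.card + 1)
    (hsub2' : nu.cells ⊆ xi.cells) (hcard2' : xi.card = nu.card + 1)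
    (cell1 : ℕ × ℕ) (hcell1 : cell1 ∈ xi.cells ∧ cell1 ∉ mu.cells)
    (cell2 : ℕ × ℕ) (hcell2 : cell2 ∈ mu.cells ∧ cell2 ∉ lam.cells)
    (ext1 : SYT lam → SYT mu)
    (hext1 : ∀ (T : SYT lam) (c : ℕ × ℕ) (hc : c ∈ lam.cells),
      (((ext1 T).1 ⟨c, hsub1 hc⟩ : Fin mu.card) : ℕ) = ((T.1 ⟨c, hc⟩ : Fin lam.card) : ℕ))
    (ext2 : SYT mu → SYT xi)
    (hext2 : ∀ (T : SYT mu) (c : ℕ × ℕ) (hc : c ∈ mu.cells),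
      (((ext2 T).1 ⟨c, hsub2 hc⟩ : Fin xi.card) : ℕ) = ((T.1 ⟨c, hc⟩ : Fin mu.card) : ℕ))
    (ext1' : SYT lam → SYT nu)
    (hext1' : ∀ (T : SYT lam) (c : ℕ × ℕ) (hc : c ∈ lam.cells),
      (((ext1' T).1 ⟨c, hsub1' hc⟩ : Fin nu.card) : ℕ) = ((T.1 ⟨c, hc⟩ : Fin lam.card) : ℕ))
    (ext2' : SYT nu → SYT xi)
    (hext2' : ∀ (T : SYT nu) (c : ℕ × ℕ) (hc : c ∈ nu.cells),
      (((ext2' T).1 ⟨c, hsub2' hc⟩ : Fin xi.card) : ℕ) = ((T.1 ⟨c, hc⟩ : Fin nu.card) : ℕ))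
    (i1 : EuclideanSpace ℝ (SYT lam) →ₗ[ℝ] EuclideanSpace ℝ (SYT mu))
    (hi1 : ∀ T : SYT lam,
      i1 (EuclideanSpace.single T (1 : ℝ)) = EuclideanSpace.single (ext1 T) (1 : ℝ))
    (i2 : EuclideanSpace ℝ (SYT mu) →ₗ[ℝ] EuclideanSpace ℝ (SYT xi))
    (hi2 : ∀ T : SYT mu,
      i2 (EuclideanSpace.single T (1 : ℝ)) = EuclideanSpace.single (ext2 T) (1 : ℝ))
    (i1' : EuclideanSpace ℝ (SYT lam) →ₗ[ℝ] EuclideanSpace ℝ (SYT nu))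
    (hi1' : ∀ T : SYT lam,
      i1' (EuclideanSpace.single T (1 : ℝ)) = EuclideanSpace.single (ext1' T) (1 : ℝ))
    (i2' : EuclideanSpace ℝ (SYT nu) →ₗ[ℝ] EuclideanSpace ℝ (SYT xi))
    (hi2' : ∀ T : SYT nu,
      i2' (EuclideanSpace.single T (1 : ℝ)) = EuclideanSpace.single (ext2' T) (1 : ℝ))
    (iadj1' : EuclideanSpace ℝ (SYT nu) →ₗ[ℝ] EuclideanSpace ℝ (SYT lam))
    (hadj1' : ∀ (x : EuclideanSpace ℝ (SYT nu)) (y : EuclideanSpace ℝ (SYT lam)),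
      ⟪iadj1' x, y⟫ = ⟪x, i1' y⟫)
    (iadj2' : EuclideanSpace ℝ (SYT xi) →ₗ[ℝ] EuclideanSpace ℝ (SYT nu))
    (hadj2' : ∀ (x : EuclideanSpace ℝ (SYT xi)) (y : EuclideanSpace ℝ (SYT nu)),
      ⟪iadj2' x, y⟫ = ⟪x, i2' y⟫)
    (ρxi : Equiv.Perm (Fin xi.card) →* (Module.End ℝ (EuclideanSpace ℝ (SYT xi)))ˣ)
    (hρxi : ∀ k : Fin xi.card, 1 ≤ k.val →
      ((ρxi (Equiv.swap (kpred k) k) : Module.End ℝ (EuclideanSpace ℝ (SYT xi)))) =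
        youngOp xi k) :
    iadj1' ∘ₗ iadj2' ∘ₗ
        ((ρxi (Equiv.swap (kpred (⟨xi.card - 1, by omega⟩ : Fin xi.card))
            (⟨xi.card - 1, by omega⟩ : Fin xi.card)) :
          Module.End ℝ (EuclideanSpace ℝ (SYT xi)))) ∘ₗ i2 ∘ₗ i1 =
      Real.sqrt (1 -
          (((((cell1.2 : ℤ) - (cell1.1 : ℤ)) - ((cell2.2 : ℤ) - (cell2.1 : ℤ)) : ℤ) : ℝ))⁻¹ ^ 2) •
        (LinearMap.id : EuclideanSpace ℝ (SYT lam) →ₗ[ℝ] EuclideanSpace ℝ (SYT lam)) := by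
  classical
  -- combinatorial set facts
  have hc1lam : cell1 ∉ lam.cells := fun h => hcell1.2 (hsub1 h)
  have hne12 : cell1 ≠ cell2 := fun h => hcell1.2 (h ▸ hcell2.1)
  have uniq_mu : ∀ x ∈ mu.cells, x ∉ lam.cells → x = cell2 :=
    diff_unique lam.cells mu.cells hsub1 hcard1 cell2 hcell2.1 hcell2.2
  have hc2nu : cell2 ∉ nu.cells := by
    intro h
    apply hmunu
    have hsubmn : mu.cells ⊆ nu.cells := by
      intro x hx
      by_cases hxl : x ∈ lam.cells
      · exact hsub1' hxl
      · rw [uniq_mu x hx hxl]; exact h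
    have hcards : nu.cells.card ≤ mu.cells.card := by
      show nu.card ≤ mu.card
      omega
    exact YoungDiagram.ext (Finset.eq_of_subset_of_card_le hsubmn hcards)
  have uniq_xinu : ∀ x ∈ xi.cells, x ∉ nu.cells → x = cell2 :=
    diff_unique nu.cells xi.cells hsub2' hcard2' cell2 (hsub2 hcell2.1) hc2nu
  have hc1nu : cell1 ∈ nu.cells := by
    by_contra h
    exact hne12 (uniq_xinu cell1 hcell1.1 h)
  have uniq_nulam : ∀ x ∈ nu.cells, x ∉ lam.cells → x = cell1 :=
    diff_unique lam.cells nu.cells hsub1' hcard1' cell1 hc1nu hc1lam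
  have uniq_ximu : ∀ x ∈ xi.cells, x ∉ mu.cells → x = cell1 :=
    diff_unique mu.cells xi.cells hsub2 hcard2 cell1 hcell1.1 hcell1.2
  have hxi1 : xi.card - 1 < xi.card := by omega
  -- entry value facts for S := ext2 (ext1 T)
  have S_lam : ∀ (T : SYT lam) (c : ℕ × ℕ) (hc : c ∈ lam.cells) (hc' : c ∈ xi.cells),
      (((ext2 (ext1 T)).1 ⟨c, hc'⟩ : Fin xi.card) : ℕ) = ((T.1 ⟨c, hc⟩ : Fin lam.card) : ℕ) :=
    fun T c hc _ => (hext2 (ext1 T) c (hsub1 hc)).trans (hext1 T c hc)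
  have ext1_cell2 : ∀ T : SYT lam,
      (((ext1 T).1 ⟨cell2, hcell2.1⟩ : Fin mu.card) : ℕ) = lam.card := fun T =>
    top_value lam mu hsub1 hcard1 cell2 hcell2.1 uniq_mu (ext1 T).1
      (fun c hc => by rw [hext1 T c hc]; exact (T.1 ⟨c, hc⟩).isLt)
  have S_cell2 : ∀ (T : SYT lam) (hc' : cell2 ∈ xi.cells),
      (((ext2 (ext1 T)).1 ⟨cell2, hc'⟩ : Fin xi.card) : ℕ) = lam.card :=
    fun T _ => (hext2 (ext1 T) cell2 hcell2.1).trans (ext1_cell2 T)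
  have S_cell1 : ∀ T : SYT lam,
      (((ext2 (ext1 T)).1 ⟨cell1, hcell1.1⟩ : Fin xi.card) : ℕ) = mu.card := fun T =>
    top_value mu xi hsub2 hcard2 cell1 hcell1.1 uniq_ximu (ext2 (ext1 T)).1
      (fun c hc => by rw [hext2 (ext1 T) c hc]; exact ((ext1 T).1 ⟨c, hc⟩).isLt)
  -- entry value facts for U := ext2' (ext1' T')
  have U_lam : ∀ (T' : SYT lam) (c : ℕ × ℕ) (hc : c ∈ lam.cells) (hc' : c ∈ xi.cells),
      (((ext2' (ext1' T')).1 ⟨c, hc'⟩ : Fin xi.card) : ℕ) = ((T'.1 ⟨c, hc⟩ : Fin lam.card) : ℕ) :=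
    fun T' c hc _ => (hext2' (ext1' T') c (hsub1' hc)).trans (hext1' T' c hc)
  have ext1'_cell1 : ∀ T' : SYT lam,
      (((ext1' T').1 ⟨cell1, hc1nu⟩ : Fin nu.card) : ℕ) = lam.card := fun T' =>
    top_value lam nu hsub1' hcard1' cell1 hc1nu uniq_nulam (ext1' T').1
      (fun c hc => by rw [hext1' T' c hc]; exact (T'.1 ⟨c, hc⟩).isLt)
  have U_cell1 : ∀ (T' : SYT lam) (hc' : cell1 ∈ xi.cells),
      (((ext2' (ext1' T')).1 ⟨cell1, hc'⟩ : Fin xi.card) : ℕ) = lam.card :=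
    fun T' _ => (hext2' (ext1' T') cell1 hc1nu).trans (ext1'_cell1 T')
  have U_cell2 : ∀ (T' : SYT lam) (hc' : cell2 ∈ xi.cells),
      (((ext2' (ext1' T')).1 ⟨cell2, hc'⟩ : Fin xi.card) : ℕ) = nu.card := fun T' _ =>
    top_value nu xi hsub2' hcard2' cell2 (hsub2 hcell2.1) uniq_xinu (ext2' (ext1' T')).1
      (fun c hc => by rw [hext2' (ext1' T') c hc]; exact ((ext1' T').1 ⟨c, hc⟩).isLt)
  set k0 : Fin xi.card := ⟨xi.card - 1, hxi1⟩ with hk0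
  have hk0v : (k0 : ℕ) = xi.card - 1 := rfl
  have hkpv : ((kpred k0 : Fin xi.card) : ℕ) = xi.card - 2 := by
    show xi.card - 1 - 1 = xi.card - 2
    omega
  have U_app_cell2 : ∀ T' : SYT lam,
      (ext2' (ext1' T')).1 ⟨cell2, hsub2 hcell2.1⟩ = k0 := by
    intro T'
    have h := U_cell2 T' (hsub2 hcell2.1)
    apply Fin.ext
    rw [h, hk0v]
    omega
  have U_app_cell1 : ∀ T' : SYT lam,
      (ext2' (ext1' T')).1 ⟨cell1, hcell1.1⟩ = kpred k0 := by
    intro T'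
    have h := U_cell1 T' hcell1.1
    apply Fin.ext
    rw [h, hkpv]
    omega
  have U_symm_k0 : ∀ T' : SYT lam,
      (ext2' (ext1' T')).1.symm k0 = ⟨cell2, hsub2 hcell2.1⟩ :=
    fun T' => (Equiv.symm_apply_eq _).mpr (U_app_cell2 T').symm
  have U_symm_kp : ∀ T' : SYT lam,
      (ext2' (ext1' T')).1.symm (kpred k0) = ⟨cell1, hcell1.1⟩ :=
    fun T' => (Equiv.symm_apply_eq _).mpr (U_app_cell1 T').symm
  have hdvalU : ∀ T' : SYT lam, dval k0 (ext2' (ext1' T')) =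
      (((cell2.2 : ℤ) - (cell2.1 : ℤ) - ((cell1.2 : ℤ) - (cell1.1 : ℤ)) : ℤ) : ℝ) := by
    intro T'
    unfold dval content
    rw [U_symm_k0 T', U_symm_kp T']
  -- swapped U = S iff T' = T
  have hswap_eq : ∀ T : SYT lam,
      swapped k0 (ext2' (ext1' T)) = (ext2 (ext1 T)).1 := by
    intro T
    apply Equiv.ext
    rintro ⟨c, hc⟩
    show Equiv.swap (kpred k0) k0 ((ext2' (ext1' T)).1 ⟨c, hc⟩) = (ext2 (ext1 T)).1 ⟨c, hc⟩
    by_cases hcl : c ∈ lam.cells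
    · have hval : (((ext2' (ext1' T)).1 ⟨c, hc⟩ : Fin xi.card) : ℕ) < lam.card := by
        rw [U_lam T c hcl hc]; exact (T.1 ⟨c, hcl⟩).isLt
      have hne1 : (ext2' (ext1' T)).1 ⟨c, hc⟩ ≠ kpred k0 := by
        intro hh; rw [hh, hkpv] at hval; omega
      have hne2 : (ext2' (ext1' T)).1 ⟨c, hc⟩ ≠ k0 := by
        intro hh; rw [hh, hk0v] at hval; omega
      rw [Equiv.swap_apply_of_ne_of_ne hne1 hne2]
      apply Fin.ext
      rw [U_lam T c hcl hc, S_lam T c hcl hc]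
    · by_cases hcnu : c ∈ nu.cells
      · have hceq : c = cell1 := uniq_nulam c hcnu hcl
        subst hceq
        rw [U_app_cell1 T, Equiv.swap_apply_left]
        apply Fin.ext
        rw [hk0v, S_cell1 T]
        omega
      · have hceq : c = cell2 := uniq_xinu c hc hcnu
        subst hceq
        rw [U_app_cell2 T, Equiv.swap_apply_right]
        apply Fin.ext
        rw [hkpv, S_cell2 T hc]
        omega
  have hswap_ne : ∀ T T' : SYT lam,
      swapped k0 (ext2' (ext1' T')) = (ext2 (ext1 T)).1 → T' = T := by
    intro T T' h
    apply Subtype.ext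
    apply Equiv.ext
    rintro ⟨c, hc⟩
    have hcxi : c ∈ xi.cells := hsub2 (hsub1 hc)
    have happ := congrArg
      (fun f : {c : ℕ × ℕ // c ∈ xi.cells} ≃ Fin xi.card => f ⟨c, hcxi⟩) h
    simp only [swapped, Equiv.trans_apply] at happ
    have hval : (((ext2' (ext1' T')).1 ⟨c, hcxi⟩ : Fin xi.card) : ℕ) < lam.card := by
      rw [U_lam T' c hc hcxi]; exact (T'.1 ⟨c, hc⟩).isLt
    have hne1 : (ext2' (ext1' T')).1 ⟨c, hcxi⟩ ≠ kpred k0 := by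
      intro hh; rw [hh, hkpv] at hval; omega
    have hne2 : (ext2' (ext1' T')).1 ⟨c, hcxi⟩ ≠ k0 := by
      intro hh; rw [hh, hk0v] at hval; omega
    rw [Equiv.swap_apply_of_ne_of_ne hne1 hne2] at happ
    apply Fin.ext
    have h1 := U_lam T' c hc hcxi
    have h2 := S_lam T c hc hcxi
    rw [← h1, ← h2, happ]
  have hUSne : ∀ T T' : SYT lam, ext2' (ext1' T') ≠ ext2 (ext1 T) := by
    intro T T' h
    have h2 := S_cell2 T (hsub2 hcell2.1)
    have h3 := U_cell2 T' (hsub2 hcell2.1)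
    rw [h] at h3
    omega
  -- coordinate formula for the adjoint pair
  have coord : ∀ (y : EuclideanSpace ℝ (SYT xi)) (T' : SYT lam),
      (iadj1' (iadj2' y)) T' = y (ext2' (ext1' T')) := by
    intro y T'
    calc iadj1' (iadj2' y) T'
        = ⟪EuclideanSpace.single T' (1 : ℝ), iadj1' (iadj2' y)⟫ := by
          rw [EuclideanSpace.inner_single_left]; simp
      _ = ⟪iadj1' (iadj2' y), EuclideanSpace.single T' 1⟫ := real_inner_comm _ _
      _ = ⟪iadj2' y, i1' (EuclideanSpace.single T' 1)⟫ := hadj1' _ _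
      _ = ⟪iadj2' y, EuclideanSpace.single (ext1' T') 1⟫ := by rw [hi1']
      _ = ⟪y, i2' (EuclideanSpace.single (ext1' T') 1)⟫ := hadj2' _ _
      _ = ⟪y, EuclideanSpace.single (ext2' (ext1' T')) 1⟫ := by rw [hi2']
      _ = ⟪EuclideanSpace.single (ext2' (ext1' T')) (1 : ℝ), y⟫ := real_inner_comm _ _
      _ = y (ext2' (ext1' T')) := by rw [EuclideanSpace.inner_single_left]; simp
  have hρ := hρxi k0 (by rw [hk0v]; omega)
  apply Module.Basis.ext (EuclideanSpace.basisFun (SYT lam) ℝ).toBasis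
  intro T
  have hbT : (EuclideanSpace.basisFun (SYT lam) ℝ).toBasis T = EuclideanSpace.single T 1 := by
    simp [OrthonormalBasis.coe_toBasis, EuclideanSpace.basisFun_apply]
  rw [hbT]
  rw [LinearMap.comp_apply, LinearMap.comp_apply, LinearMap.comp_apply, LinearMap.comp_apply,
    hi1 T, hi2 (ext1 T)]
  rw [hρ]
  simp only [LinearMap.smul_apply, LinearMap.id_apply]
  ext T'
  rw [coord]
  simp only [youngOp, LinearMap.coe_mk, AddHom.coe_mk, PiLp.toLp_apply]
  rw [hdvalU T']
  have hsingle0 : (EuclideanSpace.single (ext2 (ext1 T)) (1 : ℝ)) (ext2' (ext1' T')) = 0 := by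
    rw [EuclideanSpace.single_apply, if_neg (hUSne T T')]
  rw [hsingle0, mul_zero, zero_add]
  have hsqrt : Real.sqrt (1 -
        ((((cell2.2 : ℤ) - (cell2.1 : ℤ) - ((cell1.2 : ℤ) - (cell1.1 : ℤ)) : ℤ) : ℝ))⁻¹ ^ 2)
      = Real.sqrt (1 -
        (((((cell1.2 : ℤ) - (cell1.1 : ℤ)) - ((cell2.2 : ℤ) - (cell2.1 : ℤ)) : ℤ) : ℝ))⁻¹ ^ 2) := by
    congr 2
    have hneg : (((cell2.2 : ℤ) - (cell2.1 : ℤ) - ((cell1.2 : ℤ) - (cell1.1 : ℤ)) : ℤ) : ℝ)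
        = -(((((cell1.2 : ℤ) - (cell1.1 : ℤ)) - ((cell2.2 : ℤ) - (cell2.1 : ℤ)) : ℤ) : ℝ)) := by
      push_cast; ring
    rw [hneg, inv_neg, neg_sq]
  rw [hsqrt]
  rw [PiLp.smul_apply, EuclideanSpace.single_apply, smul_eq_mul]
  by_cases hTT : T' = T
  · subst hTT
    rw [if_pos rfl, mul_one]
    have hcond : IsStandard xi (swapped k0 (ext2' (ext1' T'))) := by
      rw [hswap_eq T']; exact (ext2 (ext1 T')).2
    rw [dif_pos hcond]
    have hval1 : (EuclideanSpace.single (ext2 (ext1 T')) (1 : ℝ))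
        ⟨swapped k0 (ext2' (ext1' T')), hcond⟩ = 1 := by
      refine (EuclideanSpace.single_apply _ _ _).trans ?_
      exact if_pos (Subtype.ext (hswap_eq T'))
    rw [hval1, mul_one]
  · rw [if_neg hTT, mul_zero]
    by_cases h : IsStandard xi (swapped k0 (ext2' (ext1' T')))
    · rw [dif_pos h]
      have hval0 : (EuclideanSpace.single (ext2 (ext1 T)) (1 : ℝ))
          ⟨swapped k0 (ext2' (ext1' T')), h⟩ = 0 := by
        refine (EuclideanSpace.single_apply _ _ _).trans ?_
        rw [if_neg]
        intro he
        exact hTT (hswap_ne T T' (congrArg Subtype.val he))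
      rw [hval0, mul_zero]
    · rw [dif_neg h, mul_zero]

end WLE
end
end
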